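/- For all natural numbers m ≤ n with m ≥ 1, Σ_{i=0}^{m} C(m,i)(n-i)n^(i-1) = (n+1-m)(n+1)^(m-1), interpreting the i = 0 term as n·n^(-1) = 1 (i.e., the sum is 1 + Σ_{i=1}^{m} C(m,i)(n-i)n^(i-1)). -/

import Mathlib

open Finset

lemma sum_pow_eq (x : ℚ) (m : ℕ) :
    ∑ i ∈ Finset.range (m + 1), (Nat.choose m i : ℚ) * x ^ i = (x + 1) ^ m := by
  rw [add_pow]
  refine Finset.sum_congr rfl fun i hi => ?_
  ring

theorem binom_identity (m n : ℕ) (hm : 1 ≤ m) (hmn : m ≤ n) :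
    1 + ∑ i ∈ Finset.Icc 1 m,
      (Nat.choose m i : ℚ) * ((n : ℚ) - i) * (n : ℚ) ^ (i - 1)
    = ((n : ℚ) + 1 - m) * ((n : ℚ) + 1) ^ (m - 1) := by
  have key : ∀ i ∈ Finset.Icc 1 m,
      (Nat.choose m i : ℚ) * ((n : ℚ) - i) * (n : ℚ) ^ (i - 1)
      = (Nat.choose m i : ℚ) * (n : ℚ) ^ i
        - (m : ℚ) * ((Nat.choose (m - 1) (i - 1) : ℚ) * (n : ℚ) ^ (i - 1)) := by
    intro i hi
    obtain ⟨h1, h2⟩ := Finset.mem_Icc.mp hi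
    obtain ⟨j, rfl⟩ := Nat.exists_eq_add_of_le h1
    obtain ⟨k, rfl⟩ := Nat.exists_eq_add_of_le hm
    have hc : (1 + k) * Nat.choose k j = Nat.choose (1 + k) (1 + j) * (1 + j) := by
      simpa [Nat.add_comm 1 k, Nat.add_comm 1 j, Nat.succ_eq_add_one] using
        Nat.add_one_mul_choose_eq k j
    have hcq : ((1 + k : ℕ) : ℚ) * (Nat.choose k j : ℚ)
        = (Nat.choose (1 + k) (1 + j) : ℚ) * ((1 + j : ℕ) : ℚ) := by
      exact_mod_cast congrArg (Nat.cast : ℕ → ℚ) hc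
    simp only [Nat.add_sub_cancel_left, Nat.add_sub_cancel]
    have hj : ((1 : ℕ) + j - 1) = j := by omega
    clear hj
    have hpow : (n : ℚ) ^ (1 + j) = (n : ℚ) * (n : ℚ) ^ j := by
      rw [pow_add, pow_one]
    push_cast at hcq ⊢
    rw [hpow]
    linear_combination ((n:ℚ)^j) * hcq
  rw [Finset.sum_congr rfl key, Finset.sum_sub_distrib]
  have hset : Finset.range (m + 1) = insert 0 (Finset.Icc 1 m) := by
    ext x; simp [Finset.mem_range, Finset.mem_Icc]; omega
  have hA : 1 + ∑ i ∈ Finset.Icc 1 m, (Nat.choose m i : ℚ) * (n : ℚ) ^ i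
      = ((n : ℚ) + 1) ^ m := by
    rw [← sum_pow_eq (n : ℚ) m, hset, Finset.sum_insert (by simp)]
    simp
  have hB : ∑ i ∈ Finset.Icc 1 m, (Nat.choose (m - 1) (i - 1) : ℚ) * (n : ℚ) ^ (i - 1)
      = ((n : ℚ) + 1) ^ (m - 1) := by
    rw [← sum_pow_eq (n : ℚ) (m - 1)]
    have : m - 1 + 1 = m := by omega
    rw [this]
    have : Finset.Icc 1 m = Finset.Ico 1 (m + 1) := by
      ext x; simp [Finset.mem_Icc, Finset.mem_Ico]
    rw [this, Finset.sum_Ico_eq_sum_range]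
    simp
  rw [← Finset.mul_sum, hB]
  have hm' : ((n : ℚ) + 1) ^ m = ((n : ℚ) + 1) * ((n : ℚ) + 1) ^ (m - 1) := by
    conv_lhs => rw [show m = 1 + (m - 1) by omega]
    rw [pow_add, pow_one]
  linarith [hA, hm']
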